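/- For $n \ge 2$, the monomials $s_1^{l_1} s_2^{l_2} \cdots s_{n-1}^{l_{n-1}} s_n^{-l_n}$, where $l_1,\dots,l_{n-1} \in \mathbb{Z}_{\ge 0}$ and $l_n = \frac{1}{n}\sum_{i=1}^{n-1} i l_i \in \mathbb{Z}$, form a $\mathbb{Z}$-basis of the degree-zero component of $\mathbb{Z}[s_1,\dots,s_{n-1},s_n^{\pm 1}]$, where $s_i$ is the $i$-th elementary symmetric polynomial in $x_1,\dots,x_n$ and the grading is by total degree in the $x_i$. Consequently this ring is isomorphic to the monoid algebra $\mathbb{Z}[M_{n-1}]$ with $M_{n-1} = \{(l_1,\dots,l_{n-1}) \in \mathbb{Z}_+^{n-1} \mid \sum_{i=1}^{n-1} i l_i \equiv 0 \pmod n\}$. -/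

import Mathlib

open Finset

/-- The monomial `x^v` in the group algebra `ℤ[ℤⁿ] = ℤ[x₁^{±1},…,xₙ^{±1}]`. -/
noncomputable def mono (n : ℕ) (v : Fin n → ℤ) : AddMonoidAlgebra ℤ (Fin n → ℤ) :=
  AddMonoidAlgebra.single v 1

/-- The `i`-th elementary symmetric polynomial `sᵢ` in `x₁,…,xₙ` (the index `i : Fin n`
corresponds to the classical index `i+1 ∈ {1,…,n}`). -/
noncomputable def esymB (n : ℕ) (i : Fin n) : AddMonoidAlgebra ℤ (Fin n → ℤ) :=
  ∑ A ∈ Finset.powersetCard (i.1 + 1) (Finset.univ : Finset (Fin n)),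
    ∏ j ∈ A, mono n (Pi.single j 1)

/-- The inverse `sₙ⁻¹ = x₁⁻¹⋯xₙ⁻¹` of the top elementary symmetric polynomial. -/
noncomputable def esymTopInv (n : ℕ) : AddMonoidAlgebra ℤ (Fin n → ℤ) :=
  mono n (fun _ => -1)

/-- The monoid `M_{n-1} = {(l₁,…,l_{n-1}) ∈ ℤ₊^{n-1} | ∑ i·lᵢ ≡ 0 (mod n)}`
(the `Fin (n-1)`-index `i` corresponds to the classical index `i+1`). -/
def Mmon (n : ℕ) : AddSubmonoid (Fin (n - 1) → ℕ) where
  carrier := {l | n ∣ ∑ i, (i.1 + 1) * l i}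
  zero_mem' := by simp
  add_mem' := by
    intro a b ha hb
    have : (∑ i, (i.1 + 1) * (a + b) i) = (∑ i, (i.1 + 1) * a i) + ∑ i, (i.1 + 1) * b i := by
      simp [Pi.add_apply, mul_add, Finset.sum_add_distrib]
    show n ∣ ∑ i, (i.1 + 1) * (a + b) i
    rw [this]
    exact Nat.dvd_add ha hb

/-- The monomial `s₁^{l₁} ⋯ s_{n-1}^{l_{n-1}} / sₙ^{lₙ}` with `lₙ = (∑ i·lᵢ)/n`. -/
noncomputable def basisElt (n : ℕ) (l : Mmon n) : AddMonoidAlgebra ℤ (Fin n → ℤ) :=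
  (∏ i : Fin (n - 1), esymB n (Fin.castLE (Nat.sub_le n 1) i) ^ (l.1 i)) *
    esymTopInv n ^ ((∑ i, (i.1 + 1) * l.1 i) / n)

namespace AnAux

variable {n : ℕ}

lemma mono_zero : mono n 0 = 1 := rfl

lemma mono_mul (v w : Fin n → ℤ) : mono n v * mono n w = mono n (v + w) := by
  simp [mono, AddMonoidAlgebra.single_mul_single]

lemma mono_pow (k : ℕ) (v : Fin n → ℤ) : mono n v ^ k = mono n (k • v) := by
  simp [mono, AddMonoidAlgebra.single_pow]

lemma prod_mono {α : Type*} (s : Finset α) (v : α → Fin n → ℤ) :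
    ∏ j ∈ s, mono n (v j) = mono n (∑ j ∈ s, v j) := by
  classical
  induction s using Finset.induction_on with
  | empty => simp [mono_zero]
  | insert _ _ h ih => rw [Finset.prod_insert h, Finset.sum_insert h, ih, mono_mul]

lemma sum_single_indicator {A : Finset (Fin n)} :
    ∑ i : Fin n, (∑ j ∈ A, (Pi.single j 1 : Fin n → ℤ)) i = A.card := by
  classical
  simp only [Finset.sum_apply]
  rw [Finset.sum_comm]
  simp [Pi.single_apply, Finset.sum_ite_eq]

/-- degree-homogeneity of an element of the group algebra -/
def IsHom (n : ℕ) (d : ℤ) (p : AddMonoidAlgebra ℤ (Fin n → ℤ)) : Prop :=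
  ∀ v ∈ p.coeff.support, ∑ i, v i = d

lemma isHom_mono (v : Fin n → ℤ) : IsHom n (∑ i, v i) (mono n v) := by
  intro w hw
  have := Finsupp.support_single_subset hw
  rw [Finset.mem_singleton] at this
  rw [this]

lemma isHom_one : IsHom n 0 1 := by
  have := isHom_mono (n := n) 0
  simpa [mono_zero] using this

lemma IsHom.mul {d e : ℤ} {p q : AddMonoidAlgebra ℤ (Fin n → ℤ)}
    (hp : IsHom n d p) (hq : IsHom n e q) : IsHom n (d + e) (p * q) := by
  classical
  intro v hv
  have := AddMonoidAlgebra.support_coeff_mul_subset p q hv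
  rw [Finset.mem_add] at this
  obtain ⟨a, ha, b, hb, rfl⟩ := this
  simp only [Pi.add_apply]
  rw [Finset.sum_add_distrib, hp a ha, hq b hb]

lemma IsHom.pow {d : ℤ} {p : AddMonoidAlgebra ℤ (Fin n → ℤ)} (hp : IsHom n d p) (k : ℕ) :
    IsHom n (k * d) (p ^ k) := by
  induction k with
  | zero => simpa using isHom_one
  | succ k ih =>
    have h2 := ih.mul hp
    rw [← pow_succ] at h2
    have he : ((k + 1 : ℕ) : ℤ) * d = (k : ℤ) * d + d := by push_cast; ring
    rw [he]
    exact h2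

lemma isHom_sum {ι : Type*} {s : Finset ι} {d : ℤ} {f : ι → AddMonoidAlgebra ℤ (Fin n → ℤ)}
    (h : ∀ j ∈ s, IsHom n d (f j)) : IsHom n d (∑ j ∈ s, f j) := by
  intro v hv
  rw [AddMonoidAlgebra.coeff_sum] at hv
  obtain ⟨i, hi, hvi⟩ := Finsupp.mem_support_finset_sum v hv
  exact h i hi v hvi

lemma isHom_prod {ι : Type*} {s : Finset ι} {d : ι → ℤ} {f : ι → AddMonoidAlgebra ℤ (Fin n → ℤ)}
    (h : ∀ j ∈ s, IsHom n (d j) (f j)) : IsHom n (∑ j ∈ s, d j) (∏ j ∈ s, f j) := by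
  classical
  induction s using Finset.induction_on with
  | empty => simpa using isHom_one
  | @insert a s ha ih =>
    rw [Finset.prod_insert ha, Finset.sum_insert ha]
    exact (h a (Finset.mem_insert_self a s)).mul (ih fun j hj => h j (Finset.mem_insert_of_mem hj))

lemma isHom_esymB (i : Fin n) : IsHom n (i.1 + 1) (esymB n i) := by
  rw [esymB]
  apply isHom_sum
  intro A hA
  rw [prod_mono]
  have hc := (Finset.mem_powersetCard.mp hA).2
  have := isHom_mono (n := n) (∑ j ∈ A, Pi.single j 1)
  rwa [sum_single_indicator, hc] at this

lemma isHom_esymTopInv : IsHom n (-(n : ℤ)) (esymTopInv n) := by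
  have := isHom_mono (n := n) (fun _ => -1)
  simpa [esymTopInv] using this

end AnAux

namespace AnAux
open MvPolynomial

variable {n : ℕ}

noncomputable def iota (n : ℕ) : MvPolynomial (Fin n) ℤ →ₐ[ℤ] AddMonoidAlgebra ℤ (Fin n → ℤ) :=
  aeval (fun j => mono n (Pi.single j 1))

lemma iota_monomial (t : Fin n →₀ ℕ) (r : ℤ) :
    iota n (monomial t r) = AddMonoidAlgebra.single (fun i => (t i : ℤ)) r := by
  classical
  rw [iota, aeval_monomial, Finsupp.prod]
  simp_rw [mono_pow]
  rw [prod_mono]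
  have hw : (∑ j ∈ t.support, (t j) • (Pi.single j 1 : Fin n → ℤ)) = fun i => (t i : ℤ) := by
    ext i
    rw [Finset.sum_apply]
    have hterm : ∀ c ∈ t.support, ((t c) • (Pi.single c 1 : Fin n → ℤ)) i
        = if i = c then (t c : ℤ) else 0 := by
      intro c _
      rw [Pi.smul_apply, Pi.single_apply]
      split_ifs <;> simp
    rw [Finset.sum_congr rfl hterm, Finset.sum_ite_eq t.support i fun j => ((t j : ℤ))]
    by_cases h : i ∈ t.support
    · simp [h]
    · simp [h, Finsupp.notMem_support_iff.mp h]
  rw [hw, ← Algebra.smul_def, mono, AddMonoidAlgebra.smul_single]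
  simp

lemma iota_apply (p : MvPolynomial (Fin n) ℤ) :
    iota n p = AddMonoidAlgebra.mapDomain (fun (t : Fin n →₀ ℕ) (i : Fin n) => (t i : ℤ)) p := by
  induction p using MvPolynomial.induction_on' with
  | monomial t r => rw [iota_monomial, ← single_eq_monomial, AddMonoidAlgebra.mapDomain_single]
  | add p q hp hq => rw [map_add, hp, hq, AddMonoidAlgebra.mapDomain_add]

lemma iota_injective : Function.Injective (iota n) := by
  have hinj : Function.Injective (fun (t : Fin n →₀ ℕ) (i : Fin n) => (t i : ℤ)) := by
    intro a b h
    ext i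
    exact Nat.cast_injective (congrFun h i)
  intro p q h
  apply AddMonoidAlgebra.mapDomain_injective hinj
  rw [← iota_apply, ← iota_apply]
  exact h

lemma iota_esymB (i : Fin n) : iota n (esymm (Fin n) ℤ (i.1 + 1)) = esymB n i := by
  rw [MvPolynomial.esymm, map_sum, esymB]
  refine Finset.sum_congr rfl fun A _ => ?_
  rw [map_prod]
  exact Finset.prod_congr rfl fun j _ => by rw [iota, aeval_X]

noncomputable def Gmap (n : ℕ) : MvPolynomial (Fin n) ℤ →ₐ[ℤ] MvPolynomial (Fin n) ℤ :=
  aeval (fun i : Fin n => esymm (Fin n) ℤ (i.1 + 1))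

lemma Gmap_injective : Function.Injective (Gmap n) := by
  have h : ∀ p, Gmap n p = ((esymmAlgHom (Fin n) ℤ n) p).val := fun p => by
    rw [esymmAlgHom_apply, Gmap]
  intro p q hpq
  apply esymmAlgHom_fin_injective (R := ℤ) (le_refl n)
  apply Subtype.ext
  rw [← h, ← h]
  exact hpq

lemma Gmap_monomial (t : Fin n →₀ ℕ) :
    Gmap n (monomial t 1) = ∏ i : Fin n, esymm (Fin n) ℤ (i.1 + 1) ^ t i := by
  rw [Gmap, aeval_monomial, map_one, one_mul, Finsupp.prod_pow]

noncomputable def Fmap (n : ℕ) : MvPolynomial (Fin n) ℤ →ₐ[ℤ] AddMonoidAlgebra ℤ (Fin n → ℤ) :=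
  (iota n).comp (Gmap n)

lemma Fmap_injective : Function.Injective (Fmap n) := fun p q h =>
  Gmap_injective (iota_injective (by simpa [Fmap] using h))

lemma Fmap_monomial (a : Fin n → ℕ) :
    Fmap n (monomial (Finsupp.equivFunOnFinite.symm a) 1) = ∏ i : Fin n, esymB n i ^ a i := by
  rw [Fmap, AlgHom.comp_apply, Gmap_monomial, map_prod]
  refine Finset.prod_congr rfl fun i _ => ?_
  rw [map_pow, iota_esymB]
  congr 1

end AnAux

namespace AnAux

variable {N : ℕ}

lemma castLE_eq_castSucc : (Fin.castLE (Nat.sub_le (N + 1) 1) : Fin N → Fin (N + 1)) =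
    Fin.castSucc := by
  funext i
  exact Fin.ext rfl

lemma esymB_last : esymB (N + 1) (Fin.last N) = mono (N + 1) (fun _ => 1) := by
  rw [esymB]
  have h1 : (Fin.last N).1 + 1 = (univ : Finset (Fin (N + 1))).card := by
    simp [Fin.last]
  rw [h1, Finset.powersetCard_self, Finset.sum_singleton, prod_mono]
  congr 1
  funext i
  rw [Finset.sum_apply]
  simp [Pi.single_apply]

lemma stop_inv : esymB (N + 1) (Fin.last N) * esymTopInv (N + 1) = 1 := by
  rw [esymB_last, esymTopInv, mono_mul, ← mono_zero]
  congr 1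

/-- the general product form of elements of the monoid generated by the `sᵢ` and `sₙ⁻¹`. -/
noncomputable def TForm (n : ℕ) (a : Fin n → ℕ) (k : ℕ) : AddMonoidAlgebra ℤ (Fin n → ℤ) :=
  (∏ i, esymB n i ^ a i) * esymTopInv n ^ k

lemma isHom_TForm {n : ℕ} (a : Fin n → ℕ) (k : ℕ) :
    IsHom n (((∑ i, (i.1 + 1) * a i : ℕ) : ℤ) - ((n * k : ℕ) : ℤ)) (TForm n a k) := by
  have h1 := isHom_prod (s := univ) (d := fun i : Fin n => (a i : ℤ) * ((i.1 : ℤ) + 1))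
    (f := fun i => esymB n i ^ a i) (fun i _ => (isHom_esymB i).pow (a i))
  have h2 := (isHom_esymTopInv (n := n)).pow k
  have h3 := h1.mul h2
  have h4 : (∑ j : Fin n, (a j : ℤ) * ((j.1 : ℤ) + 1)) = ∑ j : Fin n, ((j.1 : ℤ) + 1) * (a j : ℤ) :=
    Finset.sum_congr rfl fun j _ => mul_comm _ _
  rw [h4] at h3
  have he : (∑ j : Fin n, ((j.1 : ℤ) + 1) * (a j : ℤ)) + (k : ℤ) * -(n : ℤ)
      = ((∑ i, (i.1 + 1) * a i : ℕ) : ℤ) - ((n * k : ℕ) : ℤ) := by push_cast; ring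
  rw [TForm]
  rw [← he]
  exact h3

lemma basisElt_eq_TForm (l : Mmon (N + 1)) :
    basisElt (N + 1) l = TForm (N + 1) (Fin.snoc l.1 0) ((∑ i, (i.1 + 1) * l.1 i) / (N + 1)) := by
  rw [basisElt, TForm, castLE_eq_castSucc]
  congr 1
  rw [Fin.prod_univ_castSucc]
  simp only [Fin.snoc_castSucc, Fin.snoc_last, pow_zero, mul_one]
  exact rfl

lemma isHom_basisElt (l : Mmon (N + 1)) : IsHom (N + 1) 0 (basisElt (N + 1) l) := by
  obtain ⟨u, hu⟩ := l.2
  rw [basisElt_eq_TForm]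
  have h := isHom_TForm (n := N + 1) (Fin.snoc l.1 0) ((∑ i, (i.1 + 1) * l.1 i) / (N + 1))
  have hsum : (∑ i : Fin (N + 1), (i.1 + 1) * (Fin.snoc l.1 0 : Fin (N+1) → ℕ) i)
      = ∑ i : Fin N, (i.1 + 1) * l.1 i := by
    rw [Fin.sum_univ_castSucc]
    simp [Fin.snoc_castSucc, Fin.snoc_last]
  rw [hsum] at h
  have hdiv : (N + 1) * ((∑ i, (i.1 + 1) * l.1 i) / (N + 1)) = ∑ i, (i.1 + 1) * l.1 i :=
    Nat.mul_div_cancel' ⟨u, hu⟩ 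
  rw [hdiv] at h
  simpa using h

lemma TForm_eq_basisElt (a : Fin (N + 1) → ℕ) (k : ℕ)
    (hdeg : ∑ i : Fin (N + 1), (i.1 + 1) * a i = (N + 1) * k) :
    ∃ l : Mmon (N + 1), TForm (N + 1) a k = basisElt (N + 1) l := by
  set l0 : Fin N → ℕ := fun i => a i.castSucc with hl0
  have hsplit : (∑ i : Fin N, (i.1 + 1) * l0 i) + (N + 1) * a (Fin.last N) = (N + 1) * k := by
    rw [← hdeg, Fin.sum_univ_castSucc]
    simp [hl0, Fin.last]
  have hlast : a (Fin.last N) ≤ k := by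
    have h1 : (N + 1) * a (Fin.last N) ≤ (N + 1) * k := le_add_self.trans hsplit.le
    exact Nat.le_of_mul_le_mul_left h1 (Nat.succ_pos N)
  obtain ⟨u, hu⟩ := Nat.exists_eq_add_of_le hlast
  have hS : (∑ i : Fin N, (i.1 + 1) * l0 i) = (N + 1) * u := by
    rw [hu, Nat.mul_add] at hsplit
    omega
  have hmem : l0 ∈ Mmon (N + 1) := ⟨u, hS⟩
  refine ⟨⟨l0, hmem⟩, ?_⟩
  have hdivu : (∑ i : Fin N, (i.1 + 1) * l0 i) / (N + 1) = u := by
    rw [hS]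
    exact Nat.mul_div_cancel_left u (Nat.succ_pos N)
  rw [TForm, basisElt, castLE_eq_castSucc]
  show (∏ i : Fin (N + 1), esymB (N + 1) i ^ a i) * esymTopInv (N + 1) ^ k
      = (∏ i : Fin N, esymB (N + 1) i.castSucc ^ l0 i) * esymTopInv (N + 1) ^ ((∑ i : Fin N, (i.1 + 1) * l0 i) / (N + 1))
  rw [hdivu, Fin.prod_univ_castSucc, hu, pow_add]
  have : esymB (N + 1) (Fin.last N) ^ a (Fin.last N) * esymTopInv (N + 1) ^ a (Fin.last N) = 1 := by
    rw [← mul_pow, stop_inv, one_pow]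
  calc (∏ i : Fin N, esymB (N + 1) i.castSucc ^ a i.castSucc) * esymB (N + 1) (Fin.last N) ^ a (Fin.last N) * (esymTopInv (N + 1) ^ a (Fin.last N) * esymTopInv (N + 1) ^ u)
      = (∏ i : Fin N, esymB (N + 1) i.castSucc ^ a i.castSucc) * (esymB (N + 1) (Fin.last N) ^ a (Fin.last N) * esymTopInv (N + 1) ^ a (Fin.last N)) * esymTopInv (N + 1) ^ u := by ring
    _ = (∏ i : Fin N, esymB (N + 1) i.castSucc ^ l0 i) * esymTopInv (N + 1) ^ u := by
        rw [this, mul_one]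

lemma mono_mul_basisElt (l : Mmon (N + 1)) (K : ℕ)
    (hK : (∑ i, (i.1 + 1) * l.1 i) / (N + 1) ≤ K) :
    mono (N + 1) (fun _ => (K : ℤ)) * basisElt (N + 1) l =
      ∏ i : Fin (N + 1), esymB (N + 1) i ^
        (Fin.snoc l.1 (K - (∑ i, (i.1 + 1) * l.1 i) / (N + 1)) : Fin (N + 1) → ℕ) i := by
  set m := (∑ i, (i.1 + 1) * l.1 i) / (N + 1) with hm
  rw [basisElt, castLE_eq_castSucc, Fin.prod_univ_castSucc]
  simp only [Fin.snoc_castSucc, Fin.snoc_last]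
  have key : mono (N + 1) (fun _ => (K : ℤ)) * esymTopInv (N + 1) ^ m
      = esymB (N + 1) (Fin.last N) ^ (K - m) := by
    rw [esymTopInv, mono_pow, mono_mul, esymB_last, mono_pow]
    have hv : ((fun _ => (K : ℤ)) + m • fun _ => (-1 : ℤ))
        = ((K - m) • (fun _ => (1 : ℤ)) : Fin (N + 1) → ℤ) := by
      funext i
      rw [Pi.add_apply, Pi.smul_apply, Pi.smul_apply, nsmul_eq_mul, nsmul_eq_mul,
        mul_neg_one, mul_one]
      omega
    rw [hv]
  calc mono (N + 1) (fun _ => (K : ℤ)) * ((∏ i : Fin N, esymB (N + 1) i.castSucc ^ l.1 i) * esymTopInv (N + 1) ^ m)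
      = (∏ i : Fin N, esymB (N + 1) i.castSucc ^ l.1 i) * (mono (N + 1) (fun _ => (K : ℤ)) * esymTopInv (N + 1) ^ m) := by ring
    _ = (∏ i : Fin N, esymB (N + 1) i.castSucc ^ l.1 i) * esymB (N + 1) (Fin.last N) ^ (K - m) := by rw [key]

end AnAux

namespace AnAux

open MvPolynomial

variable {N : ℕ}

/-- The exponent of `sₙ⁻¹` in `basisElt`. -/
def msl (N : ℕ) (l : Mmon (N + 1)) : ℕ := (∑ i, (i.1 + 1) * l.1 i) / (N + 1)

lemma li (N : ℕ) : LinearIndependent ℤ (basisElt (N + 1)) := by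
  rw [linearIndependent_iff']
  intro s g hsum l hl
  classical
  set K := s.sup (msl N) with hK
  set tl : Mmon (N + 1) → (Fin (N + 1) →₀ ℕ) :=
    fun l => Finsupp.equivFunOnFinite.symm (Fin.snoc l.1 (K - msl N l)) with htl
  have tl_inj : Function.Injective tl := by
    intro a b hab
    have h1 := Finsupp.equivFunOnFinite.symm.injective hab
    apply Subtype.ext
    funext i
    have h2 := congrFun h1 i.castSucc
    rwa [Fin.snoc_castSucc, Fin.snoc_castSucc] at h2
  have hmul : ∀ l' ∈ s, mono (N + 1) (fun _ => (K : ℤ)) * basisElt (N + 1) l'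
      = Fmap (N + 1) (MvPolynomial.monomial (tl l') 1) := by
    intro l' hl'
    have h := mono_mul_basisElt l' K (Finset.le_sup (f := msl N) hl')
    rw [h, htl, Fmap_monomial]
    rfl
  have h0 : Fmap (N + 1) (∑ l' ∈ s, g l' • MvPolynomial.monomial (tl l') (1 : ℤ)) = 0 := by
    rw [map_sum]
    have hterm : ∀ l' ∈ s, Fmap (N + 1) (g l' • MvPolynomial.monomial (tl l') (1 : ℤ))
        = g l' • (mono (N + 1) (fun _ => (K : ℤ)) * basisElt (N + 1) l') := by
      intro l' hl'
      rw [map_zsmul, hmul l' hl']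
    rw [Finset.sum_congr rfl hterm]
    calc ∑ l' ∈ s, g l' • (mono (N + 1) (fun _ => (K : ℤ)) * basisElt (N + 1) l')
        = mono (N + 1) (fun _ => (K : ℤ)) * ∑ l' ∈ s, g l' • basisElt (N + 1) l' := by
          rw [Finset.mul_sum]
          exact Finset.sum_congr rfl fun l' _ => (mul_smul_comm _ _ _).symm
      _ = 0 := by rw [hsum, mul_zero]
  have h2 : (∑ l' ∈ s, g l' • MvPolynomial.monomial (tl l') (1 : ℤ)) = 0 :=
    Fmap_injective (by rw [h0, map_zero])
  have hsingles : LinearIndependent ℤ (fun l : Mmon (N + 1) => MvPolynomial.monomial (tl l) (1 : ℤ)) := by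
    have hb := (MvPolynomial.basisMonomials (Fin (N + 1)) ℤ).linearIndependent
    have := hb.comp tl tl_inj
    exact this
  refine linearIndependent_iff'.mp hsingles s g ?_ l hl
  simpa only [MvPolynomial.single_eq_monomial] using h2

lemma basisElt_zero : basisElt (N + 1) 0 = 1 := by
  rw [basisElt]
  simp

lemma basisElt_add (a b : Mmon (N + 1)) :
    basisElt (N + 1) (a + b) = basisElt (N + 1) a * basisElt (N + 1) b := by
  obtain ⟨u, hu⟩ := a.2
  obtain ⟨v, hv⟩ := b.2
  have hab : ((a + b : Mmon (N + 1)) : Fin (N + 1 - 1) → ℕ)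
      = (a : Fin (N + 1 - 1) → ℕ) + (b : Fin (N + 1 - 1) → ℕ) := rfl
  have hsum : (∑ i : Fin (N + 1 - 1), (i.1 + 1) * (a + b).1 i)
      = (∑ i : Fin (N + 1 - 1), (i.1 + 1) * a.1 i)
        + ∑ i : Fin (N + 1 - 1), (i.1 + 1) * b.1 i := by
    rw [hab]
    simp [Pi.add_apply, mul_add, Finset.sum_add_distrib]
  have hdiv : (∑ i : Fin (N + 1 - 1), (i.1 + 1) * (a + b).1 i) / (N + 1)
      = (∑ i : Fin (N + 1 - 1), (i.1 + 1) * a.1 i) / (N + 1)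
        + (∑ i : Fin (N + 1 - 1), (i.1 + 1) * b.1 i) / (N + 1) := by
    rw [hsum, hu, hv, ← Nat.mul_add, Nat.mul_div_cancel_left _ (Nat.succ_pos N),
      Nat.mul_div_cancel_left _ (Nat.succ_pos N), Nat.mul_div_cancel_left _ (Nat.succ_pos N)]
  rw [basisElt, basisElt, basisElt, hdiv, pow_add]
  have hprod : (∏ i : Fin (N + 1 - 1), esymB (N + 1) (Fin.castLE (Nat.sub_le (N + 1) 1) i) ^ ((a + b).1 i))
      = (∏ i : Fin (N + 1 - 1), esymB (N + 1) (Fin.castLE (Nat.sub_le (N + 1) 1) i) ^ (a.1 i))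
        * ∏ i : Fin (N + 1 - 1), esymB (N + 1) (Fin.castLE (Nat.sub_le (N + 1) 1) i) ^ (b.1 i) := by
    rw [← Finset.prod_mul_distrib]
    refine Finset.prod_congr rfl fun i _ => ?_
    rw [hab, Pi.add_apply, pow_add]
  rw [hprod]
  ring

noncomputable def fHom (N : ℕ) :
    AddMonoidAlgebra ℤ (Mmon (N + 1)) →ₐ[ℤ] AddMonoidAlgebra ℤ (Fin (N + 1) → ℤ) :=
  AddMonoidAlgebra.lift ℤ _ (Mmon (N + 1))
    { toFun := fun l => basisElt (N + 1) (Multiplicative.toAdd l)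
      map_one' := basisElt_zero
      map_mul' := fun a b => basisElt_add _ _ }

lemma fHom_single (l : Mmon (N + 1)) :
    fHom N (AddMonoidAlgebra.single l 1) = basisElt (N + 1) l := by
  rw [fHom, AddMonoidAlgebra.lift_single, one_smul]
  rfl

lemma fHom_injective (N : ℕ) : Function.Injective (fHom N) := by
  have key : ∀ p, fHom N p = Finsupp.linearCombination ℤ (basisElt (N + 1)) p.coeff := by
    intro p
    induction p using AddMonoidAlgebra.induction_linear with
    | zero => rw [map_zero, AddMonoidAlgebra.coeff_zero, map_zero]
    | add f g hf hg => rw [map_add, AddMonoidAlgebra.coeff_add, map_add, hf, hg]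
    | single a b =>
      rw [AddMonoidAlgebra.coeff_single, Finsupp.linearCombination_single]
      have hs : AddMonoidAlgebra.single a b = b • AddMonoidAlgebra.single a (1 : ℤ) := by
        rw [AddMonoidAlgebra.smul_single]
        norm_num
      rw [hs, map_zsmul, fHom_single]
  have li' : Function.Injective ⇑(Finsupp.linearCombination ℤ (basisElt (N + 1))) := li N
  intro p q hpq
  apply AddMonoidAlgebra.coeff_injective
  apply li'
  rw [← key, ← key]
  exact hpq

end AnAux

namespace AnAux

variable {N : ℕ}

/-- The submodule of elements supported in total degree zero. -/
noncomputable def degZero (n : ℕ) : Submodule ℤ (AddMonoidAlgebra ℤ (Fin n → ℤ)) where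
  carrier := {p | ∀ v : Fin n → ℤ, (∑ i, v i) ≠ 0 → p.coeff v = 0}
  add_mem' := fun {a b} ha hb v hv => by
    rw [AddMonoidAlgebra.coeff_add, Finsupp.add_apply, ha v hv, hb v hv, add_zero]
  zero_mem' := fun v _ => rfl
  smul_mem' := fun c p hp v hv => by
    rw [AddMonoidAlgebra.coeff_smul, Finsupp.smul_apply, hp v hv, smul_zero]

/-- Projection onto the degree-zero component. -/
noncomputable def proj0 (n : ℕ) :
    AddMonoidAlgebra ℤ (Fin n → ℤ) →ₗ[ℤ] AddMonoidAlgebra ℤ (Fin n → ℤ) where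
  toFun p := AddMonoidAlgebra.ofCoeff (Finsupp.filter (fun v => ∑ i, v i = 0) p.coeff)
  map_add' _ _ := by rw [AddMonoidAlgebra.coeff_add, Finsupp.filter_add, AddMonoidAlgebra.ofCoeff_add]
  map_smul' _ _ := by
    rw [AddMonoidAlgebra.coeff_smul, Finsupp.filter_smul, AddMonoidAlgebra.ofCoeff_smul, RingHom.id_apply]

/-- The multiplicative monoid of all `s`-monomials. -/
noncomputable def Tmon (n : ℕ) : Submonoid (AddMonoidAlgebra ℤ (Fin n → ℤ)) where
  carrier := {g | ∃ (a : Fin n → ℕ) (k : ℕ), g = TForm n a k}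
  one_mem' := ⟨0, 0, by simp [TForm]⟩
  mul_mem' := by
    rintro x y ⟨a, k, rfl⟩ ⟨b, j, rfl⟩
    refine ⟨a + b, k + j, ?_⟩
    rw [TForm, TForm, TForm]
    simp only [Pi.add_apply, pow_add]
    rw [Finset.prod_mul_distrib]
    ring

lemma closure_subset_T (n : ℕ) :
    Submonoid.closure (insert (esymTopInv n) (Set.range (esymB n))) ≤ Tmon n := by
  apply Submonoid.closure_le.mpr
  rintro x (rfl | ⟨j, rfl⟩)
  · refine ⟨0, 1, ?_⟩
    simp [TForm]
  · refine ⟨Pi.single j 1, 0, ?_⟩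
    rw [TForm, pow_zero, mul_one]
    rw [Finset.prod_eq_single j (fun i _ hij => by rw [Pi.single_eq_of_ne hij, pow_zero])
      (by simp)]
    rw [Pi.single_eq_same, pow_one]

lemma proj0_TForm (a : Fin (N + 1) → ℕ) (k : ℕ) :
    proj0 (N + 1) (TForm (N + 1) a k) ∈ Submodule.span ℤ (Set.range (basisElt (N + 1))) := by
  by_cases hd : ∑ i : Fin (N + 1), (i.1 + 1) * a i = (N + 1) * k
  · obtain ⟨l, hl⟩ := TForm_eq_basisElt a k hd
    have hfix : proj0 (N + 1) (TForm (N + 1) a k) = TForm (N + 1) a k := by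
      apply AddMonoidAlgebra.coeff_injective
      show Finsupp.filter _ _ = _
      rw [Finsupp.filter_eq_self_iff]
      intro v hv
      have hmem : v ∈ (TForm (N + 1) a k).coeff.support := Finsupp.mem_support_iff.mpr hv
      have := isHom_TForm a k v hmem
      rw [this, hd]
      simp
    rw [hfix, hl]
    exact Submodule.subset_span ⟨l, rfl⟩
  · have hzero : proj0 (N + 1) (TForm (N + 1) a k) = 0 := by
      apply AddMonoidAlgebra.coeff_injective
      show Finsupp.filter _ _ = 0
      rw [Finsupp.filter_eq_zero_iff]
      intro v hv
      by_contra h0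
      have hmem : v ∈ (TForm (N + 1) a k).coeff.support := Finsupp.mem_support_iff.mpr h0
      have := isHom_TForm (n := N + 1) a k v hmem
      rw [hv] at this
      have : ((∑ i : Fin (N + 1), (i.1 + 1) * a i : ℕ) : ℤ) = (((N + 1) * k : ℕ) : ℤ) := by
        omega
      exact hd (Nat.cast_injective this)
    rw [hzero]
    exact Submodule.zero_mem _

lemma mem_span_of (p : AddMonoidAlgebra ℤ (Fin (N + 1) → ℤ))
    (h1 : p ∈ Algebra.adjoin ℤ (insert (esymTopInv (N + 1)) (Set.range (esymB (N + 1)))))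
    (h2 : ∀ v : Fin (N + 1) → ℤ, (∑ i, v i) ≠ 0 → p.coeff v = 0) :
    p ∈ Submodule.span ℤ (Set.range (basisElt (N + 1))) := by
  have hspan : p ∈ Submodule.span ℤ
      ((Submonoid.closure (insert (esymTopInv (N + 1)) (Set.range (esymB (N + 1))))
        : Submonoid _) : Set _) := by
    rw [← Algebra.adjoin_eq_span]
    exact (Subalgebra.mem_toSubmodule _).mpr h1
  have hp : proj0 (N + 1) p = p := by
    apply AddMonoidAlgebra.coeff_injective
    show Finsupp.filter _ _ = _
    rw [Finsupp.filter_eq_self_iff]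
    intro v hv
    by_contra hs
    exact hv (h2 v hs)
  have hmap : proj0 (N + 1) p ∈ Submodule.map (proj0 (N + 1))
      (Submodule.span ℤ ((Submonoid.closure (insert (esymTopInv (N + 1))
        (Set.range (esymB (N + 1)))) : Submonoid _) : Set _)) :=
    Submodule.mem_map_of_mem hspan
  rw [Submodule.map_span] at hmap
  rw [← hp]
  refine Submodule.span_le.mpr ?_ hmap
  rintro x ⟨g, hg, rfl⟩
  obtain ⟨a, k, rfl⟩ := closure_subset_T (N + 1) hg
  exact proj0_TForm a k

lemma span_subset (N : ℕ) :
    Submodule.span ℤ (Set.range (basisElt (N + 1))) ≤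
      (Subalgebra.toSubmodule (Algebra.adjoin ℤ
        (insert (esymTopInv (N + 1)) (Set.range (esymB (N + 1)))))) ⊓ degZero (N + 1) := by
  rw [Submodule.span_le]
  rintro x ⟨l, rfl⟩
  rw [SetLike.mem_coe, Submodule.mem_inf]
  constructor
  · rw [Subalgebra.mem_toSubmodule, basisElt]
    apply mul_mem
    · refine prod_mem fun i _ => pow_mem ?_ _
      exact Algebra.subset_adjoin (Set.mem_insert_iff.mpr (Or.inr (Set.mem_range_self _)))
    · exact pow_mem (Algebra.subset_adjoin (Set.mem_insert _ _)) _
  · intro v hv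
    by_contra h0
    exact hv (isHom_basisElt l v (Finsupp.mem_support_iff.mpr h0))

end AnAux

/-- The monomials `s₁^{l₁}⋯s_{n-1}^{l_{n-1}} sₙ^{-lₙ}` with `(l₁,…,l_{n-1}) ∈ M_{n-1}` and
`lₙ = (∑ i lᵢ)/n` form a `ℤ`-basis of the degree-zero component (with respect to total degree
in the `xᵢ`) of `ℤ[s₁,…,s_{n-1},sₙ^{±1}]`: they are linearly independent, and their
`ℤ`-span is exactly the set of elements of `ℤ[s₁,…,s_{n-1},sₙ^{±1}]` supported on monomials
of total degree zero. Consequently the degree-zero component is isomorphic to the monoid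
algebra `ℤ[M_{n-1}]`, via the injective algebra map sending the basis of `ℤ[M_{n-1}]` to
these monomials. -/
theorem An_degree_zero_basis (n : ℕ) (hn : 2 ≤ n) :
    LinearIndependent ℤ (basisElt n) ∧
    (∀ p : AddMonoidAlgebra ℤ (Fin n → ℤ),
      (p ∈ Algebra.adjoin ℤ (insert (esymTopInv n) (Set.range (esymB n))) ∧
        ∀ v : Fin n → ℤ, (∑ i, v i) ≠ 0 → (p.coeff : (Fin n → ℤ) →₀ ℤ) v = 0) ↔
      p ∈ Submodule.span ℤ (Set.range (basisElt n))) ∧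
    ∃ f : AddMonoidAlgebra ℤ (Mmon n) →ₐ[ℤ] AddMonoidAlgebra ℤ (Fin n → ℤ),
      Function.Injective f ∧ ∀ l : Mmon n, f (AddMonoidAlgebra.single l 1) = basisElt n l := by
  obtain ⟨N, rfl⟩ : ∃ N, n = N + 1 := ⟨n - 1, by omega⟩
  refine ⟨AnAux.li N, fun p => ⟨fun hp => AnAux.mem_span_of p hp.1 hp.2, fun hp => ?_⟩,
    AnAux.fHom N, AnAux.fHom_injective N, fun l => AnAux.fHom_single l⟩
  have h := AnAux.span_subset N hp
  rw [Submodule.mem_inf] at h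
  exact ⟨(Subalgebra.mem_toSubmodule _).mp h.1, h.2⟩
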